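/- Let n, k be positive integers with n ≥ 2k + 1 ≥ 3, and let S = a_1 • ... • a_{n−k} be a zero-sum free sequence over ℤ/nℤ such that Σ_{i=1}^{n−k} \bar{a_i} ≤ n − 1. Then for every integer t with 1 ≤ t ≤ n − k there exists a nonempty subset Λ ⊆ {1,...,n−k} with Σ_{i∈Λ} \bar{a_i} = t. -/

import Mathlib

/-- The least positive integer in the congruence class `a` modulo `n`. -/
def leastPosRes (n : ℕ) (a : ZMod n) : ℕ := if a = 0 then n else a.val

lemma key_subset_sum {ι : Type*} [DecidableEq ι] (b : ι → ℕ) (s : Finset ι) :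
    (∀ i ∈ s, 1 ≤ b i) → (∑ i ∈ s, b i + 2 ≤ 2 * s.card) →
    ∀ t ≤ s.card, ∃ Λ ⊆ s, ∑ i ∈ Λ, b i = t := by
  induction s using Finset.strongInductionOn with
  | _ s ih =>
    intro hpos hsum t ht
    by_cases hall : ∀ i ∈ s, b i = 1
    · obtain ⟨Λ, hΛs, hΛc⟩ := Finset.exists_subset_card_eq ht
      refine ⟨Λ, hΛs, ?_⟩
      rw [Finset.sum_congr rfl (fun i hi => hall i (hΛs hi))]
      simp [hΛc]
    · push_neg at hall
      obtain ⟨j, hj, hj1⟩ := hall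
      have hbj2 : 2 ≤ b j := by have := hpos j hj; omega
      have hcard : (s.erase j).card + 1 = s.card := Finset.card_erase_add_one hj
      have hsum' : ∑ i ∈ s.erase j, b i + b j = ∑ i ∈ s, b i :=
        Finset.sum_erase_add s b hj
      have hlb : (s.erase j).card ≤ ∑ i ∈ s.erase j, b i := by
        calc (s.erase j).card = ∑ _i ∈ s.erase j, 1 := by simp
        _ ≤ ∑ i ∈ s.erase j, b i :=
          Finset.sum_le_sum (fun i hi => hpos i (Finset.mem_of_mem_erase hi))
      have ihs' := ih (s.erase j) (Finset.erase_ssubset hj)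
        (fun i hi => hpos i (Finset.mem_of_mem_erase hi)) (by omega)
      rcases le_or_gt t (s.erase j).card with h | h
      · obtain ⟨Λ, hΛ, hΛsum⟩ := ihs' t h
        exact ⟨Λ, hΛ.trans (Finset.erase_subset j s), hΛsum⟩
      · have hbj_le : b j + 1 ≤ s.card := by omega
        obtain ⟨Λ, hΛ, hΛsum⟩ := ihs' (t - b j) (by omega)
        refine ⟨insert j Λ, ?_, ?_⟩
        · exact Finset.insert_subset hj (hΛ.trans (Finset.erase_subset j s))
        · rw [Finset.sum_insert (fun hjΛ => (Finset.mem_erase.mp (hΛ hjΛ)).1 rfl), hΛsum]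
          omega

theorem stmt_8 (n k : ℕ) (hk : 1 ≤ k) (hn : 2 * k + 1 ≤ n)
    (a : Fin (n - k) → ZMod n)
    (hzsf : ∀ Λ : Finset (Fin (n - k)), Λ.Nonempty → ∑ i ∈ Λ, a i ≠ 0)
    (hsum : ∑ i : Fin (n - k), leastPosRes n (a i) ≤ n - 1) :
    ∀ t : ℕ, 1 ≤ t → t ≤ n - k →
      ∃ Λ : Finset (Fin (n - k)), Λ.Nonempty ∧ ∑ i ∈ Λ, leastPosRes n (a i) = t := by
  intro t ht1 ht2
  have hn0 : 0 < n := by omega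
  haveI : NeZero n := ⟨by omega⟩
  have hpos : ∀ i ∈ (Finset.univ : Finset (Fin (n - k))), 1 ≤ leastPosRes n (a i) := by
    intro i _
    unfold leastPosRes
    split
    · omega
    · rename_i h
      exact Nat.pos_of_ne_zero (fun h0 => h ((ZMod.val_eq_zero _).mp h0))
  have hcard : (Finset.univ : Finset (Fin (n - k))).card = n - k := by simp
  have hbound : ∑ i : Fin (n - k), leastPosRes n (a i) + 2 ≤
      2 * (Finset.univ : Finset (Fin (n - k))).card := by
    rw [hcard]; omega
  obtain ⟨Λ, _, hΛsum⟩ := key_subset_sum (fun i => leastPosRes n (a i)) Finset.univ hpos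
    hbound t (by omega)
  refine ⟨Λ, ?_, hΛsum⟩
  rcases Λ.eq_empty_or_nonempty with rfl | h
  · simp at hΛsum; omega
  · exact h
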